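/- Let G be a group containing a finite-index subgroup H that admits a proper action on a median graph. Then G admits a proper action on a median graph. -/

import Mathlib

namespace Stmt8

/-- A median graph: a connected simple graph in which every triple of vertices admits a
unique median with respect to the graph distance. -/
def IsMedianGraph {V : Type*} (X : SimpleGraph V) : Prop :=
  X.Connected ∧ ∀ x y z : V, ∃! m : V,
    X.dist x m + X.dist m y = X.dist x y ∧
    X.dist y m + X.dist m z = X.dist y z ∧
    X.dist x m + X.dist m z = X.dist x z



section Prod

variable {ι : Type*} {V : Type*} [Fintype ι] [DecidableEq ι] (X : SimpleGraph V)

/-- Hamming-style box product of copies of `X` indexed by `ι`. -/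
def prodGraph : SimpleGraph (ι → V) where
  Adj f g := ∃ c, X.Adj (f c) (g c) ∧ ∀ c' ≠ c, f c' = g c'
  symm := by
    constructor
    rintro f g ⟨c, hadj, h⟩
    exact ⟨c, hadj.symm, fun c' hc' => (h c' hc').symm⟩
  loopless := by
    constructor
    rintro f ⟨c, hadj, -⟩
    exact X.loopless.irrefl _ hadj

lemma walk_update {u v : V} (q : X.Walk u v) (b : ι → V) (a : ι) :
    ∃ P : (prodGraph X).Walk (Function.update b a u) (Function.update b a v),
      P.length = q.length := by
  induction q with
  | nil => exact ⟨SimpleGraph.Walk.nil, rfl⟩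
  | @cons u u' v h q ih =>
    obtain ⟨P, hP⟩ := ih
    refine ⟨SimpleGraph.Walk.cons (show (prodGraph X).Adj _ _ from ⟨a, ?_, fun c' hc' => by
      simp [Function.update_of_ne hc']⟩) P, by simp [hP]⟩
    simpa using h

lemma exists_walk_sum_aux (hX : X.Connected) (s : Finset ι) :
    ∀ f g : ι → V, (∀ c ∉ s, f c = g c) →
    ∃ P : (prodGraph X).Walk f g, P.length = ∑ c ∈ s, X.dist (f c) (g c) := by
  induction s using Finset.induction with
  | empty =>
    intro f g hfg
    have : f = g := funext fun c => hfg c (by simp)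
    subst this
    exact ⟨SimpleGraph.Walk.nil, by simp [SimpleGraph.dist_self]⟩
  | @insert a s ha ih =>
    intro f g hfg
    set g' := Function.update g a (f a) with hg'
    have h1 : ∀ c ∉ s, f c = g' c := by
      intro c hc
      by_cases hca : c = a
      · subst hca; simp [hg']
      · rw [hg', Function.update_of_ne hca]
        exact hfg c (by simp [hca, hc])
    obtain ⟨P₁, hP₁⟩ := ih f g' h1
    obtain ⟨q, hq⟩ := hX.exists_walk_length_eq_dist (f a) (g a)
    obtain ⟨P₂, hP₂⟩ := walk_update X q g a
    have hgg : Function.update g a (g a) = g := Function.update_eq_self a g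
    refine ⟨P₁.append (P₂.copy rfl hgg), ?_⟩
    rw [SimpleGraph.Walk.length_append, SimpleGraph.Walk.length_copy, hP₁, hP₂, hq,
      Finset.sum_insert ha]
    have : ∑ c ∈ s, X.dist (f c) (g' c) = ∑ c ∈ s, X.dist (f c) (g c) := by
      refine Finset.sum_congr rfl fun c hc => ?_
      rw [hg', Function.update_of_ne (by rintro rfl; exact ha hc)]
    rw [this]; ring

lemma exists_walk_sum (hX : X.Connected) (f g : ι → V) :
    ∃ P : (prodGraph X).Walk f g, P.length = ∑ c, X.dist (f c) (g c) :=
  exists_walk_sum_aux X hX Finset.univ f g (fun c hc => absurd (Finset.mem_univ c) hc)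

lemma sum_le_length (hX : X.Connected) {f g : ι → V} (P : (prodGraph X).Walk f g) :
    ∑ c, X.dist (f c) (g c) ≤ P.length := by
  induction P with
  | nil => simp [SimpleGraph.dist_self]
  | @cons f f₁ g h P ih =>
    rw [SimpleGraph.Walk.length_cons]
    obtain ⟨c₀, hadj, heq⟩ := h
    have step : ∀ c, X.dist (f c) (g c) ≤
        X.dist (f₁ c) (g c) + if c = c₀ then 1 else 0 := by
      intro c
      by_cases hc : c = c₀
      · subst hc
        simp only [if_pos rfl]
        calc X.dist (f c) (g c) ≤ X.dist (f c) (f₁ c) + X.dist (f₁ c) (g c) :=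
              hX.dist_triangle
          _ ≤ 1 + X.dist (f₁ c) (g c) := by
              have : X.dist (f c) (f₁ c) = 1 := SimpleGraph.dist_eq_one_iff_adj.2 hadj
              omega
          _ = X.dist (f₁ c) (g c) + 1 := by ring
      · rw [heq c hc]; simp [hc]
    calc ∑ c, X.dist (f c) (g c)
        ≤ ∑ c, (X.dist (f₁ c) (g c) + if c = c₀ then 1 else 0) :=
          Finset.sum_le_sum fun c _ => step c
      _ = (∑ c, X.dist (f₁ c) (g c)) + 1 := by
          rw [Finset.sum_add_distrib, Finset.sum_ite_eq' Finset.univ c₀ (fun _ => 1)]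
          simp
      _ ≤ P.length + 1 := by omega

lemma prod_dist (hX : X.Connected) (f g : ι → V) :
    (prodGraph X).dist f g = ∑ c, X.dist (f c) (g c) := by
  obtain ⟨P, hP⟩ := exists_walk_sum X hX f g
  refine le_antisymm (hP ▸ SimpleGraph.dist_le P) ?_
  obtain ⟨Q, hQ⟩ := (P.reachable).exists_walk_length_eq_dist
  exact hQ ▸ sum_le_length X hX Q

lemma prod_connected (hX : X.Connected) : (prodGraph (ι := ι) X).Connected := by
  have hne : Nonempty V := hX.nonempty
  have : Nonempty (ι → V) := ⟨fun _ => Classical.arbitrary V⟩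
  constructor
  intro f g
  obtain ⟨P, -⟩ := exists_walk_sum X hX f g
  exact ⟨P⟩

lemma prod_median (hX : IsMedianGraph X) : IsMedianGraph (prodGraph (ι := ι) X) := by
  obtain ⟨hconn, hmed⟩ := hX
  refine ⟨prod_connected X hconn, fun x y z => ?_⟩
  set m : ι → V := fun c => (hmed (x c) (y c) (z c)).choose with hm
  have hmspec := fun c => (hmed (x c) (y c) (z c)).choose_spec
  have key : ∀ f g : ι → V, (prodGraph X).dist f g = ∑ c, X.dist (f c) (g c) :=
    prod_dist X hconn
  refine ⟨m, ⟨?_, ?_, ?_⟩, ?_⟩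
  · rw [key, key, key, ← Finset.sum_add_distrib]
    exact Finset.sum_congr rfl fun c _ => (hmspec c).1.1
  · rw [key, key, key, ← Finset.sum_add_distrib]
    exact Finset.sum_congr rfl fun c _ => (hmspec c).1.2.1
  · rw [key, key, key, ← Finset.sum_add_distrib]
    exact Finset.sum_congr rfl fun c _ => (hmspec c).1.2.2
  · rintro m' ⟨h1, h2, h3⟩
    rw [key, key, key, ← Finset.sum_add_distrib] at h1 h2 h3
    have e1 := (Finset.sum_eq_sum_iff_of_le
      (fun c _ => (hconn.dist_triangle :
        X.dist (x c) (y c) ≤ X.dist (x c) (m' c) + X.dist (m' c) (y c)))).1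
      (by rw [h1])
    have e2 := (Finset.sum_eq_sum_iff_of_le
      (fun c _ => (hconn.dist_triangle :
        X.dist (y c) (z c) ≤ X.dist (y c) (m' c) + X.dist (m' c) (z c)))).1
      (by rw [h2])
    have e3 := (Finset.sum_eq_sum_iff_of_le
      (fun c _ => (hconn.dist_triangle :
        X.dist (x c) (z c) ≤ X.dist (x c) (m' c) + X.dist (m' c) (z c)))).1
      (by rw [h3])
    funext c
    exact (hmspec c).2 (m' c)
      ⟨(e1 c (Finset.mem_univ c)).symm, (e2 c (Finset.mem_univ c)).symm,
       (e3 c (Finset.mem_univ c)).symm⟩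

end Prod

section Induce

variable {G : Type*} [Group G] {V : Type*} (H : Subgroup G)

noncomputable def alpha (g : G) (c : G ⧸ H) : H :=
  ⟨(c.out)⁻¹ * g * (g⁻¹ • c).out, by
    have key : ((c.out : G ⧸ H)) = ↑(g * (g⁻¹ • c).out) := by
      rw [QuotientGroup.out_eq']
      calc c = g • (g⁻¹ • c) := by rw [smul_inv_smul]
        _ = g • ↑((g⁻¹ • c).out) := by rw [QuotientGroup.out_eq']
        _ = ↑(g * (g⁻¹ • c).out) := rfl
    rw [mul_assoc]
    exact QuotientGroup.eq.mp key⟩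

lemma alpha_coe (g : G) (c : G ⧸ H) :
    (alpha H g c : G) = (c.out)⁻¹ * g * (g⁻¹ • c).out := rfl

lemma alpha_one (c : G ⧸ H) : alpha H 1 c = 1 := by
  apply Subtype.ext
  rw [alpha_coe]
  simp

lemma alpha_mul (a b : G) (c : G ⧸ H) :
    alpha H (a * b) c = alpha H a c * alpha H b (a⁻¹ • c) := by
  apply Subtype.ext
  have hc : (a * b)⁻¹ • c = b⁻¹ • (a⁻¹ • c) := by rw [mul_inv_rev, mul_smul]
  push_cast [alpha_coe, hc]
  group

variable (ρ : H →* Equiv.Perm V)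

noncomputable def indAct (g : G) (f : G ⧸ H → V) : G ⧸ H → V :=
  fun c => ρ (alpha H g c) (f (g⁻¹ • c))

lemma indAct_one (f : G ⧸ H → V) : indAct H ρ 1 f = f := by
  funext c
  simp [indAct, alpha_one]

lemma indAct_mul (a b : G) (f : G ⧸ H → V) :
    indAct H ρ (a * b) f = indAct H ρ a (indAct H ρ b f) := by
  funext c
  have hc : (a * b)⁻¹ • c = b⁻¹ • (a⁻¹ • c) := by rw [mul_inv_rev, mul_smul]
  simp only [indAct, alpha_mul, map_mul, Equiv.Perm.mul_apply, hc]

noncomputable def indHom : G →* Equiv.Perm (G ⧸ H → V) :=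
  MonoidHom.mk' (fun g =>
    { toFun := indAct H ρ g
      invFun := indAct H ρ g⁻¹
      left_inv := fun f => by
        rw [← indAct_mul, inv_mul_cancel, indAct_one]
      right_inv := fun f => by
        rw [← indAct_mul, mul_inv_cancel, indAct_one] })
    (fun a b => Equiv.ext fun f => indAct_mul H ρ a b f)

lemma indHom_apply (g : G) (f : G ⧸ H → V) (c : G ⧸ H) :
    indHom H ρ g f c = ρ (alpha H g c) (f (g⁻¹ • c)) := rfl

end Induce

section Main

variable {G : Type*} [Group G] {V : Type*} (H : Subgroup G) (ρ : H →* Equiv.Perm V)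

lemma indAct_adj (X : SimpleGraph V) [Fintype (G ⧸ H)] [DecidableEq (G ⧸ H)]
    (hact : ∀ (h : H) (u v : V), X.Adj (ρ h u) (ρ h v) ↔ X.Adj u v)
    (g : G) (f f' : G ⧸ H → V) (h : (prodGraph X).Adj f f') :
    (prodGraph X).Adj (indHom H ρ g f) (indHom H ρ g f') := by
  obtain ⟨c, hadj, heq⟩ := h
  refine ⟨g • c, ?_, ?_⟩
  · rw [indHom_apply, indHom_apply, inv_smul_smul]
    exact (hact _ _ _).2 hadj
  · intro c' hc'
    have hne : g⁻¹ • c' ≠ c := fun hcc => hc' (by rw [← hcc, smul_inv_smul])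
    rw [indHom_apply, indHom_apply, heq _ hne]

lemma transporter_finite (hproper : ∀ v : V, {h : H | ρ h v = v}.Finite)
    (u v : V) : {h : H | ρ h u = v}.Finite := by
  rcases Set.eq_empty_or_nonempty {h : H | ρ h u = v} with he | ⟨h₀, hh₀⟩
  · simp [he]
  · have hsub : {h : H | ρ h u = v} ⊆ (fun h => h₀ * h) '' {h : H | ρ h u = u} := by
      intro h hh
      refine ⟨h₀⁻¹ * h, ?_, by group⟩
      show ρ (h₀⁻¹ * h) u = u
      rw [map_mul, Equiv.Perm.mul_apply, (hh : ρ h u = v), ← (hh₀ : ρ h₀ u = v), map_inv]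
      exact Equiv.symm_apply_apply _ _
    exact Set.Finite.subset ((hproper u).image _) hsub

lemma indHom_proper [Finite (G ⧸ H)]
    (hproper : ∀ v : V, {h : H | ρ h v = v}.Finite)
    (f : G ⧸ H → V) : {g : G | indHom H ρ g f = f}.Finite := by
  set c₀ : G ⧸ H := ((1 : G) : G ⧸ H) with hc₀
  set F : (G ⧸ H) × H → G := fun p => p.1.out * (p.2 : G) * (c₀.out)⁻¹ with hF
  set S : Set ((G ⧸ H) × H) := {p | ρ p.2 (f c₀) = f p.1} with hS
  have hSfin : S.Finite := by
    have : S ⊆ ⋃ c ∈ (Set.univ : Set (G ⧸ H)), Prod.mk c '' {h : H | ρ h (f c₀) = f c} := by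
      rintro ⟨c, h⟩ hp
      exact Set.mem_biUnion (Set.mem_univ c) ⟨h, hp, rfl⟩
    exact Set.Finite.subset
      (Set.Finite.biUnion Set.finite_univ
        (fun c _ => (transporter_finite H ρ hproper (f c₀) (f c)).image _)) this
  have hrec : ∀ g : G, g = (g • c₀).out * (alpha H g (g • c₀) : G) * (c₀.out)⁻¹ := by
    intro g
    rw [alpha_coe, inv_smul_smul]
    group
  have hsub : {g : G | indHom H ρ g f = f} ⊆ F '' S := by
    intro g hg
    refine ⟨(g • c₀, alpha H g (g • c₀)), ?_, (hrec g).symm⟩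
    show ρ (alpha H g (g • c₀)) (f c₀) = f (g • c₀)
    have := congrFun (hg : indHom H ρ g f = f) (g • c₀)
    rwa [indHom_apply, inv_smul_smul] at this
  exact Set.Finite.subset (hSfin.image F) hsub

end Main


/-- if a group `G` has a finite-index subgroup `H` acting properly on a median
graph, then `G` itself acts properly on some median graph. -/
theorem proper_action_on_median_graph_of_finite_index_subgroup
    {G : Type u} [Group G] {V : Type v} (H : Subgroup G) (hH : H.FiniteIndex)
    (X : SimpleGraph V) (hX : IsMedianGraph X)
    (ρ : H →* Equiv.Perm V)
    (hact : ∀ (h : H) (u v : V), X.Adj (ρ h u) (ρ h v) ↔ X.Adj u v)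
    (hproper : ∀ v : V, {h : H | ρ h v = v}.Finite) :
    ∃ (W : Type (max u v)) (Y : SimpleGraph W) (σ : G →* Equiv.Perm W),
      IsMedianGraph Y ∧
      (∀ (g : G) (u w : W), Y.Adj (σ g u) (σ g w) ↔ Y.Adj u w) ∧
      ∀ w : W, {g : G | σ g w = w}.Finite := by
  haveI := hH
  haveI : Finite (G ⧸ H) := H.finite_quotient_of_finiteIndex
  letI : Fintype (G ⧸ H) := Fintype.ofFinite _
  letI : DecidableEq (G ⧸ H) := Classical.decEq _
  refine ⟨(G ⧸ H) → V, prodGraph X, indHom H ρ, prod_median X hX, ?_, ?_⟩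
  · intro g u w
    constructor
    · intro h
      have h' := indAct_adj H ρ X hact g⁻¹ _ _ h
      have e : ∀ w : (G ⧸ H) → V, indHom H ρ g⁻¹ (indHom H ρ g w) = w := by
        intro w
        rw [map_inv]
        exact Equiv.symm_apply_apply _ _
      rwa [e, e] at h'
    · exact indAct_adj H ρ X hact g u w
  · exact indHom_proper H ρ hproper

end Stmt8
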